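/- In the Brown graph B(q) for an odd prime power q, no quadric vertex lies on a triangle. -/

import Mathlib

/-- `G` contains no cycle of length 4 as a (not necessarily induced) subgraph. -/
def C4Free {V : Type*} (G : SimpleGraph V) : Prop :=
  ¬ ∃ a b c d : V, a ≠ b ∧ a ≠ c ∧ a ≠ d ∧ b ≠ c ∧ b ≠ d ∧ c ≠ d ∧
    G.Adj a b ∧ G.Adj b c ∧ G.Adj c d ∧ G.Adj d a

/-- `G` has edge-connectivity at least `k`: it stays connected after
deleting any set of fewer than `k` edges. -/
def EdgeConnAtLeast {V : Type*} (G : SimpleGraph V) (k : ℕ) : Prop :=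
  ∀ s : Finset (Sym2 V), s.card < k → (G.deleteEdges ↑s).Connected

/-- The Brown graph on the projective plane over `F`: vertices are classes of
nonzero vectors of `F³`, adjacency is orthogonality of representatives. -/
def brown (F : Type*) [Field F] : SimpleGraph (Projectivization F (Fin 3 → F)) where
  Adj x y := x ≠ y ∧ ∑ i, x.rep i * y.rep i = 0
  symm := ⟨fun x y h => ⟨h.1.symm, by
    rw [← h.2]; exact Finset.sum_congr rfl fun i _ => mul_comm _ _⟩⟩
  loopless := ⟨fun x h => h.1 rfl⟩

/-- A vertex of the Brown graph is quadric if its representatives are self-orthogonal. -/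
def IsQuadric {F : Type*} [Field F] (x : Projectivization F (Fin 3 → F)) : Prop :=
  ∑ i, x.rep i * x.rep i = 0

open Matrix

/-- The BAC-CAB identity for the cross product. -/
private lemma bac_cab {F : Type*} [Field F] (a b c : Fin 3 → F) :
    a ⨯₃ (b ⨯₃ c) = (a ⬝ᵥ c) • b - (a ⬝ᵥ b) • c := by
  funext i
  fin_cases i <;>
    simp [cross_apply, dotProduct, Fin.sum_univ_three] <;> ring

/-- If `p ≠ 0` and `p ⨯₃ q = 0` then `q` is a scalar multiple of `p`. -/
private lemma cross_eq_zero_imp {F : Type*} [Field F] {p q : Fin 3 → F}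
    (hp : p ≠ 0) (h : p ⨯₃ q = 0) : ∃ t : F, q = t • p := by
  by_contra hc
  push_neg at hc
  have : LinearIndependent F ![p, q] :=
    (LinearIndependent.pair_iff' hp).2 fun a h => hc a h.symm
  exact (crossProduct_ne_zero_iff_linearIndependent.2 this) h

theorem brown_quadric_not_on_triangle (F : Type*) [Field F] [Fintype F]
    (hodd : Odd (Fintype.card F))
    (x : Projectivization F (Fin 3 → F)) (hx : IsQuadric x) :
    ¬ ∃ y z : Projectivization F (Fin 3 → F),
        (brown F).Adj x y ∧ (brown F).Adj y z ∧ (brown F).Adj z x := by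
  rintro ⟨y, z, ⟨hxy, hxy2⟩, ⟨hyz, hyz2⟩, ⟨hzx, hzx2⟩⟩
  set u := x.rep with hu
  set v := y.rep with hv
  set w := z.rep with hw
  have hu0 : u ≠ 0 := x.rep_nonzero
  have hv0 : v ≠ 0 := y.rep_nonzero
  have hw0 : w ≠ 0 := z.rep_nonzero
  have huu : u ⬝ᵥ u = 0 := hx
  have huv : u ⬝ᵥ v = 0 := hxy2
  have hvw : v ⬝ᵥ w = 0 := hyz2
  have hwu : w ⬝ᵥ u = 0 := hzx2
  -- u ⨯₃ v ≠ 0, since otherwise x = y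
  have hcuv : u ⨯₃ v ≠ 0 := by
    intro h0
    obtain ⟨t, ht⟩ := cross_eq_zero_imp hu0 h0
    have ht0 : t ≠ 0 := by rintro rfl; simp at ht; exact hv0 ht
    apply hxy
    rw [← x.mk_rep, ← y.mk_rep]
    exact ((Projectivization.mk_eq_mk_iff' F _ _ hv0 hu0).2 ⟨t, ht.symm⟩).symm
  -- u ⨯₃ (u ⨯₃ v) = 0
  have h1 : u ⨯₃ (u ⨯₃ v) = 0 := by
    rw [bac_cab, huu, huv]; simp
  obtain ⟨r, hr⟩ := cross_eq_zero_imp hu0 h1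
  have hr0 : r ≠ 0 := by rintro rfl; simp at hr; exact hcuv hr
  -- w ⨯₃ (u ⨯₃ v) = 0
  have h2 : w ⨯₃ (u ⨯₃ v) = 0 := by
    rw [bac_cab, hwu]
    have : w ⬝ᵥ v = 0 := by rwa [dotProduct_comm] at hvw
    rw [this]; simp
  rw [hr] at h2
  have h3 : w ⨯₃ u = 0 := by
    have := h2
    rw [LinearMap.map_smul, smul_eq_zero] at this
    exact this.resolve_left hr0
  obtain ⟨t, ht⟩ := cross_eq_zero_imp hw0 h3
  have ht0 : t ≠ 0 := by rintro rfl; simp at ht; exact hu0 ht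
  apply hzx
  rw [← x.mk_rep, ← z.mk_rep]
  exact (Projectivization.mk_eq_mk_iff' F _ _ hw0 hu0).2
    ⟨t⁻¹, by rw [ht, smul_smul, inv_mul_cancel₀ ht0, one_smul]⟩
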